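/- Let k be an infinite field, let B be a finite-dimensional k-algebra generated by one element as a k-algebra, and let V ⊆ A¹_k be a nonempty open subscheme. Then there exists a closed immersion of Spec B into V over k. -/

import Mathlib

open AlgebraicGeometry CategoryTheory Polynomial

lemma aux_coprime (k : Type) [Field k] [Infinite k] (f g : k[X]) (hf : f ≠ 0) (hg : g ≠ 0) :
    ∃ α : k, IsCoprime (f.comp (X - C α)) g := by
  classical
  set K := AlgebraicClosure k
  set ι := algebraMap k K with hι
  have hinj : Function.Injective ι := (algebraMap k K).injective
  set S : Finset K := Finset.image (fun p : K × K => p.2 - p.1)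
    ((f.map ι).roots.toFinset ×ˢ (g.map ι).roots.toFinset) with hS
  have hfin : {α : k | ι α ∈ (S : Set K)}.Finite :=
    Set.Finite.preimage hinj.injOn S.finite_toSet
  obtain ⟨α, hα⟩ := hfin.infinite_compl.nonempty
  refine ⟨α, ?_⟩
  rw [← Polynomial.isCoprime_map ι]
  by_contra h
  set F := (f.comp (X - C α)).map ι with hF
  set G := g.map ι with hG
  have hcomp : (f.comp (X - C α)).comp (X + C α) = f := by
    rw [comp_assoc]
    simp
  have hFC : f.comp (X - C α) ≠ 0 := by
    intro h0
    apply hf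
    rw [← hcomp, h0, zero_comp]
  have hF0 : F ≠ 0 := by
    rw [hF, Polynomial.map_ne_zero_iff hinj]; exact hFC
  have hG0 : G ≠ 0 := by
    rw [hG, Polynomial.map_ne_zero_iff hinj]; exact hg
  set d := EuclideanDomain.gcd F G with hd
  have hdu : ¬ IsUnit d := fun hu => h (EuclideanDomain.gcd_isUnit_iff.mp hu)
  have hd0 : d ≠ 0 := fun h0 => hF0 ((EuclideanDomain.gcd_eq_zero_iff).mp h0).1
  have hdeg : d.degree ≠ 0 := fun h0 => hdu (Polynomial.isUnit_iff_degree_eq_zero.mpr h0)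
  obtain ⟨γ, hγ⟩ := IsAlgClosed.exists_root d hdeg
  have hγF : F.eval γ = 0 :=
    Polynomial.eval_eq_zero_of_dvd_of_eval_eq_zero (EuclideanDomain.gcd_dvd_left F G) hγ
  have hγG : G.eval γ = 0 :=
    Polynomial.eval_eq_zero_of_dvd_of_eval_eq_zero (EuclideanDomain.gcd_dvd_right F G) hγ
  have hβ : (f.map ι).eval (γ - ι α) = 0 := by
    have : F = (f.map ι).comp (X - C (ι α)) := by
      rw [hF, Polynomial.map_comp]
      simp
    rw [this, eval_comp] at hγF
    simpa using hγF
  apply hα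
  show ι α ∈ (S : Set K)
  rw [hS]
  simp only [Finset.coe_image, Set.mem_image, Finset.mem_coe, Finset.mem_product]
  refine ⟨⟨γ - ι α, γ⟩, ⟨?_, ?_⟩, by ring⟩
  · rw [Multiset.mem_toFinset, Polynomial.mem_roots (Polynomial.map_ne_zero_iff hinj |>.mpr hf)]
    exact hβ
  · rw [Multiset.mem_toFinset, Polynomial.mem_roots hG0]
    exact hγG

/-- Over an infinite field `k`, any finite `k`-scheme `Spec (k[t]/(f))` (with `f ≠ 0`)
admits a closed immersion over `k` into any nonempty open subscheme `V` of the affine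
line `𝔸¹_k = Spec k[t]`. -/
theorem stmt_19 (k : Type) [Field k] (hk : Infinite k) (f : k[X]) (hf : f ≠ 0)
    (V : (Spec (CommRingCat.of k[X])).Opens) (hV : V ≠ ⊥) :
    ∃ ι : Spec (CommRingCat.of (k[X] ⧸ Ideal.span {f})) ⟶ V.toScheme,
      IsClosedImmersion ι ∧
      ι ≫ V.ι ≫ Spec.map (CommRingCat.ofHom (algebraMap k k[X])) =
        Spec.map (CommRingCat.ofHom (algebraMap k (k[X] ⧸ Ideal.span {f}))) := by
  classical
  -- pick a basic open D(g) ⊆ V with g ≠ 0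
  have hVne : V.carrier.Nonempty := by
    by_contra hne
    exact hV (TopologicalSpace.Opens.ext (Set.not_nonempty_iff_eq_empty.mp hne))
  obtain ⟨x, hx⟩ := hVne
  obtain ⟨u, ⟨g, hgu⟩, hxu, huV⟩ :=
    PrimeSpectrum.isTopologicalBasis_basic_opens.exists_subset_of_mem_open hx V.2
  subst hgu
  have hg : g ≠ 0 := by
    intro h0
    rw [h0] at hxu
    simp at hxu
    exact hxu
  obtain ⟨α, hcop⟩ := aux_coprime k f g hf hg
  -- the twisted quotient map
  set ψ : k[X] →ₐ[k] k[X] ⧸ Ideal.span {f} :=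
    (Ideal.Quotient.mkₐ k (Ideal.span {f})).comp (Polynomial.aeval (X + C α)) with hψ
  have hψapp : ∀ p : k[X], ψ p = Ideal.Quotient.mk _ (p.comp (X + C α)) := fun p => rfl
  have hsurj : Function.Surjective ψ := by
    intro b
    obtain ⟨p, rfl⟩ := Ideal.Quotient.mk_surjective b
    refine ⟨p.comp (X - C α), ?_⟩
    rw [hψapp, comp_assoc]
    simp
  have hker : RingHom.ker (ψ : k[X] →+* k[X] ⧸ Ideal.span {f})
      = Ideal.span {f.comp (X - C α)} := by
    ext p
    rw [RingHom.mem_ker, Ideal.mem_span_singleton]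
    show ψ p = 0 ↔ _
    rw [hψapp, Ideal.Quotient.eq_zero_iff_mem, Ideal.mem_span_singleton]
    constructor
    · rintro ⟨q, hq⟩
      refine ⟨q.comp (X - C α), ?_⟩
      have : (p.comp (X + C α)).comp (X - C α) = p := by
        rw [comp_assoc]; simp
      rw [← this, hq, mul_comp]
    · rintro ⟨q, rfl⟩
      refine ⟨q.comp (X + C α), ?_⟩
      rw [mul_comp, comp_assoc]
      simp
  set ι0 : Spec (CommRingCat.of (k[X] ⧸ Ideal.span {f})) ⟶ Spec (CommRingCat.of k[X]) :=
    Spec.map (CommRingCat.ofHom (ψ : k[X] →+* k[X] ⧸ Ideal.span {f})) with hι0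
  have hci : IsClosedImmersion ι0 := IsClosedImmersion.spec_of_surjective _ hsurj
  have hrange : Set.range ι0.base = PrimeSpectrum.zeroLocus
      (Ideal.span {f.comp (X - C α)} : Set k[X]) := by
    have h2 := range_comap_of_surjective (k[X] ⧸ Ideal.span {f})
      (ψ : k[X] →+* k[X] ⧸ Ideal.span {f}) hsurj
    rw [hker] at h2
    exact h2
  have hsub : Set.range ι0.base ⊆ V.carrier := by
    rw [hrange]
    refine Set.Subset.trans ?_ huV
    intro y hy
    obtain ⟨a, b, hab⟩ := hcop
    show g ∉ y.asIdeal
    intro hgy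
    have hfy : f.comp (X - C α) ∈ y.asIdeal :=
      hy (Ideal.subset_span (Set.mem_singleton _))
    have h1 : (1 : k[X]) ∈ y.asIdeal := by
      rw [← hab]
      exact Ideal.add_mem _ (Ideal.mul_mem_left _ _ hfy) (Ideal.mul_mem_left _ _ hgy)
    exact y.2.ne_top (Ideal.eq_top_of_isUnit_mem _ h1 isUnit_one)
  have hsub' : Set.range ι0.base ⊆ Set.range V.ι.base := by
    rw [Scheme.Opens.range_ι]; exact hsub
  refine ⟨IsOpenImmersion.lift V.ι ι0 hsub', ?_, ?_⟩
  · have hfac : IsOpenImmersion.lift V.ι ι0 hsub' ≫ V.ι = ι0 := IsOpenImmersion.lift_fac _ _ _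
    have hpre : IsPreimmersion (IsOpenImmersion.lift V.ι ι0 hsub' ≫ V.ι) := by
      rw [hfac]; infer_instance
    have : IsPreimmersion (IsOpenImmersion.lift V.ι ι0 hsub') :=
      IsPreimmersion.of_comp _ V.ι
    refine IsClosedImmersion.of_isPreimmersion _ ?_
    have hinj : Function.Injective V.ι.base := V.ι.isOpenEmbedding.injective
    have h3 := congrArg (fun m : Spec (CommRingCat.of (k[X] ⧸ Ideal.span {f})) ⟶
        Spec (CommRingCat.of k[X]) => Set.range ⇑m.base) hfac
    simp only [Scheme.Hom.comp_base, TopCat.coe_comp, Set.range_comp] at h3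
    have heq : Set.range (IsOpenImmersion.lift V.ι ι0 hsub').base
        = ⇑V.ι.base ⁻¹' Set.range ι0.base := by
      rw [← h3, Set.preimage_image_eq _ hinj]
    rw [heq]
    exact (hci.base_closed.isClosed_range).preimage V.ι.continuous
  · rw [← Category.assoc, IsOpenImmersion.lift_fac, hι0, ← Spec.map_comp]
    show Spec.map (CommRingCat.ofHom
      ((ψ : k[X] →+* k[X] ⧸ Ideal.span {f}).comp (algebraMap k k[X]))) = _
    rw [AlgHom.comp_algebraMap]
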